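/- Let θ_1, θ_2, θ_3 : ℝ → ℝ be a solution of the identical Kuramoto model for N = 3 and let Δ_1 = θ_1 − θ_2, Δ_2 = θ_2 − θ_3, Δ_3 = θ_3 − θ_1. Then the observable u_4(t) = sin((Δ_1(t) − Δ_2(t))/2) satisfies, for all t, u_4'(t) = −(K/2)·(cos Δ_1(t) + cos Δ_2(t))·u_4(t). -/

import Mathlib

lemma key_u4 (a b : ℝ) :
    Real.cos ((a - b) / 2) * (Real.sin b - Real.sin a)
      = -(Real.cos a + Real.cos b) * Real.sin ((a - b) / 2) := by
  rw [Real.sin_sub_sin, Real.cos_add_cos]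
  rw [show (b - a) / 2 = -((a - b) / 2) by ring, Real.sin_neg,
    show (b + a) / 2 = (a + b) / 2 by ring]
  ring

/-- For the identical Kuramoto model with `N = 3`, the observable
`u₄ = sin((Δ₁ − Δ₂)/2)` satisfies `u₄' = −(K/2)·(cos Δ₁ + cos Δ₂)·u₄`. -/
theorem growth_rate_u4_kuramoto3
    (ω K : ℝ) (θ1 θ2 θ3 : ℝ → ℝ)
    (h1 : ∀ t : ℝ, HasDerivAt θ1
      (ω + K / 3 * (Real.sin (θ1 t - θ1 t) + Real.sin (θ2 t - θ1 t) + Real.sin (θ3 t - θ1 t))) t)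
    (h2 : ∀ t : ℝ, HasDerivAt θ2
      (ω + K / 3 * (Real.sin (θ1 t - θ2 t) + Real.sin (θ2 t - θ2 t) + Real.sin (θ3 t - θ2 t))) t)
    (h3 : ∀ t : ℝ, HasDerivAt θ3
      (ω + K / 3 * (Real.sin (θ1 t - θ3 t) + Real.sin (θ2 t - θ3 t) + Real.sin (θ3 t - θ3 t))) t)
    (Δ1 Δ2 Δ3 : ℝ → ℝ)
    (hΔ1 : ∀ t, Δ1 t = θ1 t - θ2 t)
    (hΔ2 : ∀ t, Δ2 t = θ2 t - θ3 t)
    (hΔ3 : ∀ t, Δ3 t = θ3 t - θ1 t) :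
    ∀ t : ℝ,
      HasDerivAt (fun s => Real.sin ((Δ1 s - Δ2 s) / 2))
        (-(K / 2) * (Real.cos (Δ1 t) + Real.cos (Δ2 t))
          * Real.sin ((Δ1 t - Δ2 t) / 2)) t := by
  have e1 : Δ1 = fun t => θ1 t - θ2 t := funext hΔ1
  have e2 : Δ2 = fun t => θ2 t - θ3 t := funext hΔ2
  subst e1 e2
  intro t
  have hD := ((((h1 t).sub (h2 t)).sub ((h2 t).sub (h3 t))).div_const 2).sin
  convert hD using 1
  · rfl
  have ha : ∀ x y : ℝ, Real.sin (y - x) = -Real.sin (x - y) := fun x y => by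
    rw [show y - x = -(x - y) by ring, Real.sin_neg]
  have key := key_u4 (θ1 t - θ2 t) (θ2 t - θ3 t)
  simp only [Pi.sub_apply, sub_self, Real.sin_zero, ha (θ1 t) (θ2 t), ha (θ2 t) (θ3 t), ha (θ1 t) (θ3 t)]
  linear_combination -(K / 2) * key
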